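/- arXiv:2508.11623 — 3 statements merged into one kernel-verified Lean document; each statement's English description precedes it below -/
import Mathlib

section
/- In a Q-metric space (X,d) over a continuous quantale, a subset O ⊆ X is open in the open ball topology τ_d if and only if for every x ∈ O there exists δ ≪ 1 such that B(x,δ) ⊆ O. In particular the open balls form a base for τ_d. -/
def wayBelow {Q : Type*} [CompleteLattice Q] (x y : Q) : Prop :=
  ∀ D : Set Q, D.Nonempty → DirectedOn (· ≤ ·) D → y ≤ sSup D → ∃ d ∈ D, x ≤ d

def ContinuousLattice (Q : Type*) [CompleteLattice Q] : Prop :=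
  ∀ y : Q, y = sSup {x : Q | wayBelow x y}

/-- Open ball for a quantale-valued metric. -/
def ball {Q : Type*} [CompleteLattice Q] {X : Type*} (d : X → X → Q) (x : X) (δ : Q) :
    Set X := {y : X | wayBelow δ (d x y)}

/-- The open ball topology. -/
def ballTopology {Q : Type*} [Monoid Q] [CompleteLattice Q] {X : Type*}
    (d : X → X → Q) : TopologicalSpace X :=
  TopologicalSpace.generateFrom {B : Set X | ∃ x δ, wayBelow δ (1 : Q) ∧ B = ball d x δ}

section aux
variable {Q : Type*} [CompleteLattice Q]

lemma wb_bot (y : Q) : wayBelow ⊥ y := by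
  intro D hne _ _
  obtain ⟨a, ha⟩ := hne
  exact ⟨a, ha, bot_le⟩

lemma wb_le {a y : Q} (h : wayBelow a y) : a ≤ y := by
  obtain ⟨b, hb, hab⟩ := h {y} ⟨y, rfl⟩ (directedOn_singleton y) (by simp)
  simpa [Set.mem_singleton_iff.mp hb] using hab

lemma wb_mono_left {a a' y : Q} (h : a' ≤ a) (hw : wayBelow a y) : wayBelow a' y := by
  intro D h1 h2 h3
  obtain ⟨b, hb, hab⟩ := hw D h1 h2 h3
  exact ⟨b, hb, h.trans hab⟩

lemma wb_mono_right {a y y' : Q} (hw : wayBelow a y) (h : y ≤ y') : wayBelow a y' := by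
  intro D h1 h2 h3
  exact hw D h1 h2 (h.trans h3)

lemma wb_sup {a b y : Q} (ha : wayBelow a y) (hb : wayBelow b y) : wayBelow (a ⊔ b) y := by
  intro D h1 h2 h3
  obtain ⟨c, hc, hac⟩ := ha D h1 h2 h3
  obtain ⟨c', hc', hbc'⟩ := hb D h1 h2 h3
  obtain ⟨e, he, hce, hc'e⟩ := h2 c hc c' hc'
  exact ⟨e, he, sup_le (hac.trans hce) (hbc'.trans hc'e)⟩

lemma wb_set_directed (y : Q) : DirectedOn (· ≤ ·) {x : Q | wayBelow x y} := by
  intro a ha b hb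
  exact ⟨a ⊔ b, wb_sup ha hb, le_sup_left, le_sup_right⟩

/-- Interpolation in a continuous lattice. -/
lemma wb_interpolate (hcont : ContinuousLattice Q) {a y : Q} (h : wayBelow a y) :
    ∃ b : Q, wayBelow a b ∧ wayBelow b y := by
  set S : Set Q := {c | ∃ b, wayBelow c b ∧ wayBelow b y} with hS
  have hne : S.Nonempty := ⟨⊥, ⊥, wb_bot _, wb_bot _⟩
  have hdir : DirectedOn (· ≤ ·) S := by
    rintro c ⟨b, hcb, hby⟩ c' ⟨b', hcb', hb'y⟩
    refine ⟨c ⊔ c', ⟨b ⊔ b', wb_sup (wb_mono_right hcb le_sup_left)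
      (wb_mono_right hcb' le_sup_right), wb_sup hby hb'y⟩, le_sup_left, le_sup_right⟩
  have hy : y ≤ sSup S := by
    calc y = sSup {b | wayBelow b y} := hcont y
    _ ≤ sSup S := by
        apply sSup_le
        intro b hb
        calc b = sSup {c | wayBelow c b} := hcont b
        _ ≤ sSup S := sSup_le (fun c hc => le_sSup ⟨b, hc, hb⟩)
  obtain ⟨c, ⟨b, hcb, hby⟩, hac⟩ := h S hne hdir hy
  exact ⟨b, wb_mono_left hac hcb, hby⟩

end aux

section aux2
variable {Q : Type*} [Monoid Q] [CompleteLattice Q] [IsQuantale Q]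

/-- Key lemma: openness of balls. -/
lemma ball_mem_nhds (hcont : ContinuousLattice Q) {X : Type*} (d : X → X → Q)
    (htri : ∀ x y z : X, d x y * d y z ≤ d x z)
    {x₀ x : X} {δ : Q} (hx : wayBelow δ (d x₀ x)) :
    ∃ ε : Q, wayBelow ε (1 : Q) ∧ ball d x ε ⊆ ball d x₀ δ := by
  obtain ⟨β, hδβ, hβ⟩ := wb_interpolate hcont hx
  -- d x₀ x * 1 = sSup of image of way-below-1 set
  set W : Set Q := {ε | wayBelow ε (1 : Q)} with hW
  have h1 : d x₀ x ≤ sSup ((fun ε => d x₀ x * ε) '' W) := by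
    have heq : d x₀ x * (1 : Q) = sSup ((fun ε => d x₀ x * ε) '' W) := by
      conv_lhs => rw [show (1 : Q) = sSup W from hcont 1]
      rw [mul_sSup_distrib, sSup_image]
    exact le_of_eq ((mul_one _).symm.trans heq)
  have hdne : ((fun ε => d x₀ x * ε) '' W).Nonempty := ⟨_, ⟨⊥, wb_bot _, rfl⟩⟩
  have hdd : DirectedOn (· ≤ ·) ((fun ε => d x₀ x * ε) '' W) := by
    rintro _ ⟨a, ha, rfl⟩ _ ⟨b, hb, rfl⟩
    exact ⟨d x₀ x * (a ⊔ b), ⟨a ⊔ b, wb_sup ha hb, rfl⟩,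
      mul_le_mul_right le_sup_left _, mul_le_mul_right le_sup_right _⟩
  obtain ⟨_, ⟨ε, hε, rfl⟩, hβε⟩ := hβ _ hdne hdd h1
  refine ⟨ε, hε, fun z hz => ?_⟩
  -- hz : wayBelow ε (d x z)
  have hεz : ε ≤ d x z := wb_le hz
  have : β ≤ d x₀ z := by
    calc β ≤ d x₀ x * ε := hβε
    _ ≤ d x₀ x * d x z := mul_le_mul_right hεz _
    _ ≤ d x₀ z := htri _ _ _
  exact wb_mono_right hδβ this

end aux2

theorem ballTopology_isOpen_iff {Q : Type*} [Monoid Q] [CompleteLattice Q] [IsQuantale Q]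
    (hcont : ContinuousLattice Q) {X : Type*} (d : X → X → Q)
    (hrefl : ∀ x : X, (1 : Q) ≤ d x x)
    (htri : ∀ x y z : X, d x y * d y z ≤ d x z) (O : Set X) :
    (ballTopology d).IsOpen O ↔
      ∀ x ∈ O, ∃ δ : Q, wayBelow δ (1 : Q) ∧ ball d x δ ⊆ O := by
  constructor
  · intro h
    induction h with
    | basic B hB =>
        obtain ⟨x₀, δ, hδ, rfl⟩ := hB
        intro x hx
        exact ball_mem_nhds hcont d htri hx
    | univ =>
        intro x _
        exact ⟨⊥, wb_bot _, fun _ _ => trivial⟩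
    | inter O₁ O₂ _ _ ih₁ ih₂ =>
        intro x hx
        obtain ⟨δ₁, hδ₁, hs₁⟩ := ih₁ x hx.1
        obtain ⟨δ₂, hδ₂, hs₂⟩ := ih₂ x hx.2
        refine ⟨δ₁ ⊔ δ₂, wb_sup hδ₁ hδ₂, fun z hz => ?_⟩
        exact ⟨hs₁ (wb_mono_left le_sup_left hz), hs₂ (wb_mono_left le_sup_right hz)⟩
    | sUnion S _ ih =>
        intro x hx
        obtain ⟨O', hO', hxO'⟩ := hx
        obtain ⟨δ, hδ, hs⟩ := ih O' hO' x hxO'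
        exact ⟨δ, hδ, hs.trans (Set.subset_sUnion_of_mem hO')⟩
  · intro h
    have hO : O = ⋃₀ {B | (∃ x δ, wayBelow δ (1 : Q) ∧ B = ball d x δ) ∧ B ⊆ O} := by
      ext x
      constructor
      · intro hx
        obtain ⟨δ, hδ, hs⟩ := h x hx
        exact ⟨ball d x δ, ⟨⟨x, δ, hδ, rfl⟩, hs⟩, wb_mono_right hδ (hrefl x)⟩
      · rintro ⟨B, ⟨_, hBO⟩, hxB⟩
        exact hBO hxB
    rw [hO]
    exact TopologicalSpace.GenerateOpen.sUnion _
      (fun B hB => TopologicalSpace.GenerateOpen.basic B hB.1)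
end

section
/- For a Q-metric space (X,d) over a continuous quantale, the closure of a subset A ⊆ X with respect to the open ball topology τ_d equals {y ∈ X | for all δ ≪ 1 there exists x ∈ A with δ ≪ d(y,x)}. -/
section aux

variable {Q : Type*} [CompleteLattice Q]

theorem wayBelow.le {a b : Q} (h : wayBelow a b) : a ≤ b := by
  obtain ⟨c, hc, hac⟩ := h {b} ⟨b, rfl⟩ (directedOn_singleton b)
    (le_sSup rfl)
  rw [Set.mem_singleton_iff] at hc; exact hc ▸ hac

theorem wayBelow_bot {b : Q} : wayBelow ⊥ b := by
  intro D hD _ _; exact ⟨hD.choose, hD.choose_spec, bot_le⟩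

theorem wayBelow_of_le_left {a a' b : Q} (h : a ≤ a') (h' : wayBelow a' b) : wayBelow a b := by
  intro D h1 h2 h3
  obtain ⟨c, hc, hac⟩ := h' D h1 h2 h3
  exact ⟨c, hc, h.trans hac⟩

theorem wayBelow_of_le_right {a b b' : Q} (h : wayBelow a b) (h' : b ≤ b') : wayBelow a b' := by
  intro D h1 h2 h3
  exact h D h1 h2 (h'.trans h3)

theorem wayBelow_sup {a b c : Q} (ha : wayBelow a c) (hb : wayBelow b c) :
    wayBelow (a ⊔ b) c := by
  intro D h1 h2 h3
  obtain ⟨x, hx, hax⟩ := ha D h1 h2 h3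
  obtain ⟨y, hy, hby⟩ := hb D h1 h2 h3
  obtain ⟨z, hz, hxz, hyz⟩ := h2 x hx y hy
  exact ⟨z, hz, sup_le (hax.trans hxz) (hby.trans hyz)⟩

theorem directedOn_wayBelow (b : Q) : DirectedOn (· ≤ ·) {x : Q | wayBelow x b} := by
  intro x hx y hy
  exact ⟨x ⊔ y, wayBelow_sup hx hy, le_sup_left, le_sup_right⟩

theorem nonempty_wayBelow (b : Q) : Set.Nonempty {x : Q | wayBelow x b} :=
  ⟨⊥, wayBelow_bot⟩

/-- Interpolation in a continuous lattice. -/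
theorem wayBelow_interpolate (hcont : ContinuousLattice Q) {a b : Q} (h : wayBelow a b) :
    ∃ c, wayBelow a c ∧ wayBelow c b := by
  set D : Set Q := {u | ∃ v, wayBelow u v ∧ wayBelow v b} with hD
  have hne : D.Nonempty := ⟨⊥, ⊥, wayBelow_bot, wayBelow_bot⟩
  have hdir : DirectedOn (· ≤ ·) D := by
    rintro u1 ⟨v1, hu1, hv1⟩ u2 ⟨v2, hu2, hv2⟩
    refine ⟨u1 ⊔ u2, ⟨v1 ⊔ v2, ?_, wayBelow_sup hv1 hv2⟩, le_sup_left, le_sup_right⟩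
    exact wayBelow_sup (wayBelow_of_le_right hu1 le_sup_left)
      (wayBelow_of_le_right hu2 le_sup_right)
  have hle : b ≤ sSup D := by
    conv_lhs => rw [hcont b]
    apply sSup_le
    intro v hv
    conv_lhs => rw [hcont v]
    apply sSup_le
    intro u hu
    exact le_sSup ⟨v, hu, hv⟩
  obtain ⟨u, ⟨v, huv, hvb⟩, hau⟩ := h D hne hdir hle
  exact ⟨v, wayBelow_of_le_left hau huv, hvb⟩

end aux

section key

variable {Q : Type*} [Monoid Q] [CompleteLattice Q] [IsQuantale Q]

/-- Key lemma: a ball around a point of an open ball contains a smaller ball. -/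
theorem exists_ball_subset (hcont : ContinuousLattice Q) {X : Type*} (d : X → X → Q)
    (htri : ∀ x y z : X, d x y * d y z ≤ d x z) {x y : X} {δ : Q}
    (h : wayBelow δ (d x y)) :
    ∃ ε : Q, wayBelow ε (1 : Q) ∧ ball d y ε ⊆ ball d x δ := by
  obtain ⟨δ', hδδ', hδ'⟩ := wayBelow_interpolate hcont h
  -- d x y ≤ sSup {d x y * ε | ε ≪ 1}
  set D : Set Q := (fun ε => d x y * ε) '' {ε | wayBelow ε (1 : Q)} with hDdef
  have hne : D.Nonempty := (nonempty_wayBelow 1).image _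
  have hdir : DirectedOn (· ≤ ·) D := by
    rintro _ ⟨a, ha, rfl⟩ _ ⟨b, hb, rfl⟩
    exact ⟨d x y * (a ⊔ b), ⟨a ⊔ b, wayBelow_sup ha hb, rfl⟩,
      mul_le_mul_right le_sup_left _, mul_le_mul_right le_sup_right _⟩
  have hle : d x y ≤ sSup D := by
    have h1 : d x y * (1 : Q) ≤ sSup D := by
      conv_lhs => rw [hcont (1 : Q)]
      rw [mul_sSup_distrib]
      apply iSup_le; intro ε; apply iSup_le; intro hε
      exact le_sSup ⟨ε, hε, rfl⟩
    simpa using h1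
  obtain ⟨c, ⟨ε, hε, rfl⟩, hδ'c⟩ := hδ' D hne hdir hle
  refine ⟨ε, hε, fun z hz => ?_⟩
  have hεz : ε ≤ d y z := (hz : wayBelow ε (d y z)).le
  have : δ' ≤ d x z :=
    hδ'c.trans ((mul_le_mul_right hεz _).trans (htri x y z))
  exact wayBelow_of_le_right hδδ' this

end key

theorem ballTopology_closure {Q : Type*} [Monoid Q] [CompleteLattice Q] [IsQuantale Q]
    (hcont : ContinuousLattice Q) {X : Type*} (d : X → X → Q)
    (hrefl : ∀ x : X, (1 : Q) ≤ d x x)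
    (htri : ∀ x y z : X, d x y * d y z ≤ d x z) (A : Set X) :
    @closure X (ballTopology d) A =
      {y : X | ∀ δ : Q, wayBelow δ (1 : Q) → ∃ x ∈ A, wayBelow δ (d y x)} := by
  ext y
  rw [Set.mem_setOf_eq, @mem_closure_iff X (ballTopology d) y A]
  constructor
  · intro h δ hδ
    have hopen : @IsOpen X (ballTopology d) (ball d y δ) :=
      TopologicalSpace.GenerateOpen.basic _ ⟨y, δ, hδ, rfl⟩
    have hy : y ∈ ball d y δ := wayBelow_of_le_right hδ (hrefl y)
    obtain ⟨x, hx, hxA⟩ := h _ hopen hy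
    exact ⟨x, hxA, hx⟩
  · intro h U hU hyU
    -- it suffices to find ε ≪ 1 with ball y ε ⊆ U
    suffices hs : y ∈ U → ∃ ε : Q, wayBelow ε (1 : Q) ∧ ball d y ε ⊆ U by
      obtain ⟨ε, hε, hball⟩ := hs hyU
      obtain ⟨x, hxA, hx⟩ := h ε hε
      exact ⟨x, hball hx, hxA⟩
    clear hyU
    induction hU with
    | basic B hB =>
        obtain ⟨x, δ, hδ, rfl⟩ := hB
        intro hy
        exact exists_ball_subset hcont d htri hy
    | univ => exact fun _ => ⟨⊥, wayBelow_bot, Set.subset_univ _⟩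
    | inter U V _ _ ihU ihV =>
        intro hy
        obtain ⟨ε1, hε1, h1⟩ := ihU hy.1
        obtain ⟨ε2, hε2, h2⟩ := ihV hy.2
        refine ⟨ε1 ⊔ ε2, wayBelow_sup hε1 hε2, fun z hz => ?_⟩
        exact ⟨h1 (wayBelow_of_le_left le_sup_left hz),
          h2 (wayBelow_of_le_left le_sup_right hz)⟩
    | sUnion S _ ih =>
        intro hy
        obtain ⟨t, htS, hyt⟩ := hy
        obtain ⟨ε, hε, hsub⟩ := ih t htS hyt
        exact ⟨ε, hε, hsub.trans (Set.subset_sUnion_of_mem htS)⟩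
end

section
/- Let (X,d) be a Q-metric space over a continuous quantale. For δ₁, δ₂ ≪ 1 and δ with δ ≪ δ₁ ⊗ δ₂, one has B_R(B_R(A, δ₁), δ₂) ⊆ B_R(A, δ) for every A ⊆ X. -/
/-- The set of points belonging to `A` with precision greater than `δ`. -/
def BR {Q : Type*} [CompleteLattice Q] {X : Type*} (d : X → X → Q) (A : Set X) (δ : Q) :
    Set X := {y : X | ∃ x ∈ A, wayBelow δ (d x y)}


lemma wayBelow_le {Q : Type*} [CompleteLattice Q] {x y : Q} (h : wayBelow x y) : x ≤ y := by
  obtain ⟨d, hd, hxd⟩ := h {y} ⟨y, rfl⟩ (directedOn_singleton y)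
    (by simp)
  simp only [Set.mem_singleton_iff] at hd
  exact hd ▸ hxd

theorem BR_comp_subset {Q : Type*} [Monoid Q] [CompleteLattice Q] [IsQuantale Q]
    (hcont : ContinuousLattice Q) {X : Type*} (d : X → X → Q)
    (hrefl : ∀ x : X, (1 : Q) ≤ d x x)
    (htri : ∀ x y z : X, d x y * d y z ≤ d x z)
    {δ₁ δ₂ δ : Q} (h₁ : wayBelow δ₁ (1 : Q)) (h₂ : wayBelow δ₂ (1 : Q))
    (hδ : wayBelow δ (δ₁ * δ₂)) (A : Set X) :
    BR d (BR d A δ₁) δ₂ ⊆ BR d A δ := by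
  rintro z ⟨y, ⟨x, hxA, h1⟩, h2⟩
  refine ⟨x, hxA, fun D hne hdir hle => ?_⟩
  refine hδ D hne hdir (le_trans ?_ hle)
  calc δ₁ * δ₂ ≤ d x y * d y z := mul_le_mul' (wayBelow_le h1) (wayBelow_le h2)
    _ ≤ d x z := htri x y z
end
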